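/- Let D and N be positive integers with N > D ≥ 1, and let φ_1,…,φ_N be nonzero vectors in ℂ^D all having the same norm C^{1/2}, i.e. ‖φ_n‖² = C for all n. Then equality holds in the Welch bound, i.e. max_{n≠n'} |⟨φ_n, φ_{n'}⟩| = C·sqrt((N−D)/(D(N−1))), if and only if the vectors form an equiangular tight frame for ℂ^D, i.e. there exists A > 0 with Φ Φ* = A·I (where Φ is the D×N matrix whose n-th column is φ_n and Φ* its conjugate transpose), and |⟨φ_n, φ_{n'}⟩| takes a single constant value over all pairs n ≠ n'. -/

import Mathlib

set_option maxHeartbeats 1000000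

open Matrix

/-- Nonzero equal-norm vectors achieve equality in the Welch bound if and only if they form
an equiangular tight frame for `ℂ^D`. -/
theorem welch_equality_iff_etf (D N : ℕ) (hD : 1 ≤ D) (hDN : D < N)
    (φ : Fin N → EuclideanSpace ℂ (Fin D)) (hφ : ∀ n, φ n ≠ 0)
    (C : ℝ) (hC : ∀ n, ‖φ n‖ ^ 2 = C)
    (Φ : Matrix (Fin D) (Fin N) ℂ) (hΦ : ∀ d n, Φ d n = φ n d) :
    (⨆ p : {p : Fin N × Fin N // p.1 ≠ p.2}, ‖(inner ℂ (φ p.1.1) (φ p.1.2) : ℂ)‖)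
        = C * Real.sqrt (((N : ℝ) - D) / (D * ((N : ℝ) - 1))) ↔
      ((∃ A : ℝ, 0 < A ∧ Φ * Φᴴ = (A : ℂ) • (1 : Matrix (Fin D) (Fin D) ℂ)) ∧
        (∃ μ : ℝ, ∀ n n' : Fin N, n ≠ n' → ‖(inner ℂ (φ n) (φ n') : ℂ)‖ = μ)) := by
  have hN2 : 2 ≤ N := by omega
  have hD0 : (0:ℝ) < D := by exact_mod_cast hD
  have hN1 : (1:ℝ) < N := by exact_mod_cast hN2
  have hND : (D:ℝ) < N := by exact_mod_cast hDN
  have hDne : (D:ℝ) ≠ 0 := hD0.ne'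
  have hN1ne : (N:ℝ) - 1 ≠ 0 := by linarith
  have h01 : (⟨0, by omega⟩ : Fin N) ≠ ⟨1, by omega⟩ := by simp [Fin.ext_iff]
  haveI hne : Nonempty {p : Fin N × Fin N // p.1 ≠ p.2} :=
    ⟨⟨(⟨0, by omega⟩, ⟨1, by omega⟩), h01⟩⟩
  have hC0 : 0 < C := by
    have h := hφ ⟨0, by omega⟩
    have h2 : (0:ℝ) < ‖φ ⟨0, by omega⟩‖ ^ 2 := pow_pos (norm_pos_iff.mpr h) 2
    rwa [hC] at h2
  -- notation
  set B : ℝ := C * Real.sqrt (((N : ℝ) - D) / (D * ((N : ℝ) - 1))) with hBdef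
  set c : ℝ := (N:ℝ) * C / D with hcdef
  set M : Matrix (Fin D) (Fin D) ℂ := Φ * Φᴴ - (c:ℂ) • 1 with hMdef
  have hc0 : 0 < c := by
    rw [hcdef]
    exact div_pos (mul_pos (by linarith) hC0) hD0
  have hB0 : 0 ≤ B := by
    rw [hBdef]
    exact mul_nonneg hC0.le (Real.sqrt_nonneg _)
  have hB2 : B ^ 2 = C ^ 2 * (((N : ℝ) - D) / (D * ((N : ℝ) - 1))) := by
    rw [hBdef, mul_pow, Real.sq_sqrt (div_nonneg (by linarith) (by nlinarith))]
  -- inner products as sums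
  have hinner : ∀ n n', (inner ℂ (φ n) (φ n') : ℂ) = ∑ d, (starRingEnd ℂ) (φ n d) * φ n' d := by
    intro n n'
    rw [PiLp.inner_apply]
    simp [RCLike.inner_apply]
    exact Finset.sum_congr rfl fun _ _ => mul_comm _ _
  have hinner_self : ∀ n, (inner ℂ (φ n) (φ n) : ℂ) = ((C:ℝ) : ℂ) := by
    intro n
    rw [inner_self_eq_norm_sq_to_K, ← hC n]
    norm_cast
  have hGapp : ∀ n n', (Φᴴ * Φ) n n' = (inner ℂ (φ n) (φ n') : ℂ) := by
    intro n n'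
    rw [hinner]
    simp [Matrix.mul_apply, Matrix.conjTranspose_apply, hΦ]
  have hgnn : ∀ n, ‖(inner ℂ (φ n) (φ n) : ℂ)‖ = C := by
    intro n
    rw [hinner_self]
    simp [abs_of_nonneg hC0.le]
  -- trace of the frame operator
  have htrT : (Φ * Φᴴ).trace = (((N:ℝ) * C : ℝ) : ℂ) := by
    calc (Φ * Φᴴ).trace = ∑ d, ∑ n, Φ d n * (starRingEnd ℂ) (Φ d n) := by
          simp [Matrix.trace, Matrix.mul_apply, Matrix.diag, Matrix.conjTranspose_apply]
      _ = ∑ n, ∑ d, (starRingEnd ℂ) (φ n d) * φ n d := by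
          rw [Finset.sum_comm]
          refine Finset.sum_congr rfl fun n _ => Finset.sum_congr rfl fun d _ => ?_
          rw [hΦ]; ring
      _ = ∑ _n : Fin N, ((C:ℝ) : ℂ) := by
          refine Finset.sum_congr rfl fun n _ => ?_
          rw [← hinner n n, hinner_self]
      _ = (((N:ℝ) * C : ℝ) : ℂ) := by
          rw [Finset.sum_const]
          simp
          try push_cast
          try ring
  -- trace of G*G equals sum of squared inner products
  set S2 : ℝ := ∑ n : Fin N, ∑ n' : Fin N, ‖(inner ℂ (φ n) (φ n') : ℂ)‖ ^ 2 with hS2def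
  have hGG : ((Φᴴ * Φ) * (Φᴴ * Φ)).trace = ((S2 : ℝ) : ℂ) := by
    calc ((Φᴴ * Φ) * (Φᴴ * Φ)).trace
        = ∑ n, ∑ n', (Φᴴ * Φ) n n' * (Φᴴ * Φ) n' n := by
          simp [Matrix.trace, Matrix.mul_apply, Matrix.diag]
      _ = ∑ n, ∑ n', ((‖(inner ℂ (φ n) (φ n') : ℂ)‖ ^ 2 : ℝ) : ℂ) := by
          refine Finset.sum_congr rfl fun n _ => Finset.sum_congr rfl fun n' _ => ?_
          rw [hGapp, hGapp, ← inner_conj_symm (φ n') (φ n), Complex.mul_conj,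
            Complex.normSq_eq_norm_sq]
          try norm_cast
      _ = ((S2 : ℝ) : ℂ) := by rw [hS2def]; push_cast; ring
  -- cyclicity
  have hcyc : ((Φ * Φᴴ) * (Φ * Φᴴ)).trace = ((Φᴴ * Φ) * (Φᴴ * Φ)).trace := by
    rw [show (Φ * Φᴴ) * (Φ * Φᴴ) = (Φ * Φᴴ * Φ) * Φᴴ by simp [Matrix.mul_assoc],
      Matrix.trace_mul_comm,
      show Φᴴ * (Φ * Φᴴ * Φ) = (Φᴴ * Φ) * (Φᴴ * Φ) by simp [Matrix.mul_assoc]]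
  -- M is Hermitian
  have hMH : Mᴴ = M := by
    rw [hMdef]
    simp [Matrix.conjTranspose_sub, Matrix.conjTranspose_smul, Complex.conj_ofReal,
      (Matrix.isHermitian_mul_conjTranspose_self Φ).eq]
  set R : ℝ := ∑ d : Fin D, ∑ d' : Fin D, ‖M d d'‖ ^ 2 with hRdef
  have hR1 : (M * Mᴴ).trace = ((R : ℝ) : ℂ) := by
    calc (M * Mᴴ).trace = ∑ d, ∑ d', M d d' * (starRingEnd ℂ) (M d d') := by
          simp [Matrix.trace, Matrix.mul_apply, Matrix.diag, Matrix.conjTranspose_apply]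
      _ = ∑ d, ∑ d', ((‖M d d'‖ ^ 2 : ℝ) : ℂ) := by
          refine Finset.sum_congr rfl fun d _ => Finset.sum_congr rfl fun d' _ => ?_
          rw [Complex.mul_conj, Complex.normSq_eq_norm_sq]
          try norm_cast
      _ = ((R : ℝ) : ℂ) := by rw [hRdef]; push_cast; ring
  have hR2 : (M * Mᴴ).trace = ((S2 - ((N:ℝ) * C) ^ 2 / D : ℝ) : ℂ) := by
    rw [hMH, hMdef]
    rw [Matrix.sub_mul, Matrix.mul_sub, Matrix.mul_sub, Matrix.smul_mul, Matrix.mul_smul,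
      Matrix.mul_one, Matrix.one_mul, Matrix.smul_mul, Matrix.one_mul]
    rw [Matrix.trace_sub, Matrix.trace_sub, Matrix.trace_sub, Matrix.trace_smul,
      Matrix.trace_smul, Matrix.trace_smul, Matrix.trace_one, hcyc, hGG, htrT]
    rw [smul_smul]
    simp only [smul_eq_mul]
    rw [hcdef]
    have hDC : (D:ℂ) ≠ 0 := by exact_mod_cast hDne
    rw [Fintype.card_fin]
    field_simp
    push_cast
    field_simp
    ring
  have hRkey : R = S2 - ((N:ℝ) * C) ^ 2 / D := by
    have h := hR1.symm.trans hR2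
    exact_mod_cast h
  have hR0 : 0 ≤ R := by
    rw [hRdef]
    refine Finset.sum_nonneg fun d _ => Finset.sum_nonneg fun d' _ => by positivity
  -- off-diagonal split
  set S : ℝ := ∑ p ∈ Finset.univ.offDiag, ‖(inner ℂ (φ p.1) (φ p.2) : ℂ)‖ ^ 2 with hSdef
  have hsplit : S2 = (N:ℝ) * C ^ 2 + S := by
    have h2 : (Finset.univ ×ˢ Finset.univ : Finset (Fin N × Fin N)).filter
        (fun p => ¬ p.1 = p.2) = Finset.univ.offDiag := by
      ext p; simp [Finset.mem_offDiag]
    have h3 : (Finset.univ ×ˢ Finset.univ : Finset (Fin N × Fin N)).filter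
        (fun p => p.1 = p.2) = Finset.univ.diag := by
      ext p; simp [Finset.mem_diag, eq_comm]
    rw [hS2def, ← Finset.sum_product',
      ← Finset.sum_filter_add_sum_filter_not (Finset.univ ×ˢ Finset.univ)
        (fun p => p.1 = p.2), h2, h3, Finset.sum_diag, ← hSdef]
    congr 1
    calc ∑ n : Fin N, ‖(inner ℂ (φ n) (φ n) : ℂ)‖ ^ 2 = ∑ _n : Fin N, C ^ 2 :=
          Finset.sum_congr rfl fun n _ => by rw [hgnn]
      _ = (N:ℝ) * C ^ 2 := by rw [Finset.sum_const]; simp [nsmul_eq_mul]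
  have hcardOff : ((Finset.univ.offDiag : Finset (Fin N × Fin N)).card : ℝ)
      = (N:ℝ) * ((N:ℝ) - 1) := by
    rw [Finset.offDiag_card]
    simp only [Finset.card_univ, Fintype.card_fin]
    have hle : N ≤ N * N := Nat.le_mul_of_pos_left N (by omega)
    push_cast [Nat.cast_sub hle]
    ring
  have hNB : (N:ℝ) * ((N:ℝ) - 1) * B ^ 2 = ((N:ℝ) * C) ^ 2 / D - (N:ℝ) * C ^ 2 := by
    rw [hB2]
    field_simp
  constructor
  · -- forward
    intro hsup
    have h_le : ∀ n n', n ≠ n' → ‖(inner ℂ (φ n) (φ n') : ℂ)‖ ≤ B := by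
      intro n n' hnn
      have hb : BddAbove (Set.range fun p : {p : Fin N × Fin N // p.1 ≠ p.2} =>
          ‖(inner ℂ (φ p.1.1) (φ p.1.2) : ℂ)‖) := (Set.finite_range _).bddAbove
      have h := le_ciSup hb ⟨(n, n'), hnn⟩
      rwa [hsup] at h
    have hSle : S ≤ ((Finset.univ.offDiag : Finset (Fin N × Fin N)).card : ℝ) * B ^ 2 := by
      rw [hSdef]
      have h := Finset.sum_le_card_nsmul (Finset.univ.offDiag : Finset (Fin N × Fin N))
        (fun p => ‖(inner ℂ (φ p.1) (φ p.2) : ℂ)‖ ^ 2) (B ^ 2) ?_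
      · simpa [nsmul_eq_mul] using h
      · intro p hp
        have hpne : p.1 ≠ p.2 := (Finset.mem_offDiag.mp hp).2.2
        exact pow_le_pow_left₀ (norm_nonneg _) (h_le p.1 p.2 hpne) 2
    have hSge : ((Finset.univ.offDiag : Finset (Fin N × Fin N)).card : ℝ) * B ^ 2 ≤ S := by
      rw [hcardOff, hNB]
      linarith [hRkey, hsplit, hR0]
    have hSeq : S = ((Finset.univ.offDiag : Finset (Fin N × Fin N)).card : ℝ) * B ^ 2 :=
      le_antisymm hSle hSge
    have hReq : R = 0 := by
      rw [hRkey, hsplit, hSeq, hcardOff, hNB]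
      ring
    have hM0 : M = 0 := by
      have h1 : ∀ d ∈ (Finset.univ : Finset (Fin D)), ∑ d' : Fin D, ‖M d d'‖ ^ 2 = 0 :=
        (Finset.sum_eq_zero_iff_of_nonneg fun d _ =>
          Finset.sum_nonneg fun d' _ => by positivity).mp hReq
      ext d d'
      have h2 := (Finset.sum_eq_zero_iff_of_nonneg fun d' _ => by positivity).mp
        (h1 d (Finset.mem_univ d)) d' (Finset.mem_univ d')
      have h3 : ‖M d d'‖ = 0 := by nlinarith [norm_nonneg (M d d')]
      rw [Matrix.zero_apply]
      exact norm_eq_zero.mp h3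
    refine ⟨⟨c, hc0, ?_⟩, ⟨B, ?_⟩⟩
    · rw [hMdef] at hM0
      exact sub_eq_zero.mp hM0
    · intro n n' hnn
      have hall : ∀ p ∈ (Finset.univ.offDiag : Finset (Fin N × Fin N)),
          B ^ 2 - ‖(inner ℂ (φ p.1) (φ p.2) : ℂ)‖ ^ 2 = 0 := by
        refine (Finset.sum_eq_zero_iff_of_nonneg ?_).mp ?_
        · intro p hp
          have h := h_le p.1 p.2 (Finset.mem_offDiag.mp hp).2.2
          nlinarith [norm_nonneg (inner ℂ (φ p.1) (φ p.2) : ℂ)]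
        · rw [Finset.sum_sub_distrib, Finset.sum_const, ← hSdef, hSeq]
          simp [nsmul_eq_mul]
          try ring
      have hp : ((n, n') : Fin N × Fin N) ∈ Finset.univ.offDiag :=
        Finset.mem_offDiag.mpr ⟨Finset.mem_univ _, Finset.mem_univ _, hnn⟩
      have h := hall (n, n') hp
      have h2 : ‖(inner ℂ (φ n) (φ n') : ℂ)‖ ^ 2 = B ^ 2 := by
        simp only at h
        linarith
      calc ‖(inner ℂ (φ n) (φ n') : ℂ)‖
          = Real.sqrt (‖(inner ℂ (φ n) (φ n') : ℂ)‖ ^ 2) := (Real.sqrt_sq (norm_nonneg _)).symm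
        _ = Real.sqrt (B ^ 2) := by rw [h2]
        _ = B := Real.sqrt_sq hB0
  · -- backward
    rintro ⟨⟨A, hA0, hAeq⟩, μ, hμ⟩
    have htr2 : (((N:ℝ) * C : ℝ) : ℂ) = (A : ℂ) * D := by
      rw [← htrT, hAeq, Matrix.trace_smul, Matrix.trace_one]
      simp [smul_eq_mul]
    have htr3 : (N:ℝ) * C = A * D := by exact_mod_cast htr2
    have hAc : A = c := by
      rw [hcdef]
      field_simp
      linarith
    have hM0 : M = 0 := by
      rw [hMdef, hAeq, ← hAc]
      simp
    have hReq : R = 0 := by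
      rw [hRdef]
      refine Finset.sum_eq_zero fun d _ => Finset.sum_eq_zero fun d' _ => by rw [hM0]; simp
    have hS2eq : S2 = ((N:ℝ) * C) ^ 2 / D := by linarith [hRkey]
    have hSeq : S = (N:ℝ) * ((N:ℝ) - 1) * B ^ 2 := by
      rw [hNB]
      linarith [hsplit]
    have hSμ : S = (N:ℝ) * ((N:ℝ) - 1) * μ ^ 2 := by
      rw [hSdef]
      calc ∑ p ∈ (Finset.univ.offDiag : Finset (Fin N × Fin N)),
            ‖(inner ℂ (φ p.1) (φ p.2) : ℂ)‖ ^ 2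
          = ∑ _p ∈ (Finset.univ.offDiag : Finset (Fin N × Fin N)), μ ^ 2 :=
            Finset.sum_congr rfl fun p hp => by
              rw [hμ p.1 p.2 (Finset.mem_offDiag.mp hp).2.2]
        _ = (N:ℝ) * ((N:ℝ) - 1) * μ ^ 2 := by
            rw [Finset.sum_const, nsmul_eq_mul, hcardOff]
    have hNNpos : 0 < (N:ℝ) * ((N:ℝ) - 1) := by nlinarith
    have hμ2 : μ ^ 2 = B ^ 2 := by
      have h := hSμ.symm.trans hSeq
      exact mul_left_cancel₀ hNNpos.ne' h
    have hμ0 : 0 ≤ μ := by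
      rw [← hμ ⟨0, by omega⟩ ⟨1, by omega⟩ h01]
      exact norm_nonneg _
    have hμB : μ = B := by
      calc μ = Real.sqrt (μ ^ 2) := (Real.sqrt_sq hμ0).symm
        _ = Real.sqrt (B ^ 2) := by rw [hμ2]
        _ = B := Real.sqrt_sq hB0
    have hconst : ∀ p : {p : Fin N × Fin N // p.1 ≠ p.2},
        ‖(inner ℂ (φ p.1.1) (φ p.1.2) : ℂ)‖ = B := fun p => (hμ _ _ p.2).trans hμB
    rw [iSup_congr hconst]
    exact ciSup_const
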